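/- (Local dependence measure, non-degenerate case.) Suppose θ₁+θ₂ ≠ θ₁′. Then for all a < y₁ < y₂ < b, the local dependence measure β(y₁,y₂) = F(y₁,y₂)·f(y₁,y₂) / (F₁(y₁,y₂)·F₂(y₁,y₂)), where F₁ = ∂F/∂y₁ and F₂ = ∂F/∂y₂, equals [θ₁′(θ₁−θ₁′)·F₀(y₁)^{θ₁+θ₂−θ₁′} + θ₁′θ₂·F₀(y₂)^{θ₁+θ₂−θ₁′}] / [(θ₁−θ₁′)(θ₁+θ₂)·F₀(y₁)^{θ₁+θ₂−θ₁′} + θ₁′θ₂·F₀(y₂)^{θ₁+θ₂−θ₁′}]. -/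

import Mathlib

open MeasureTheory Set

noncomputable def dprh (a b : ℝ) (F₀ f₀ : ℝ → ℝ) (θ₁ θ₂ θ₁' θ₂' : ℝ) (y₁ y₂ : ℝ) : ℝ :=
  if a < y₁ ∧ y₁ < y₂ ∧ y₂ < b then
    θ₁' * θ₂ * f₀ y₁ * f₀ y₂ * F₀ y₁ ^ (θ₁' - 1) * F₀ y₂ ^ (θ₁ + θ₂ - θ₁' - 1)
  else if a < y₂ ∧ y₂ < y₁ ∧ y₁ < b then
    θ₁ * θ₂' * f₀ y₁ * f₀ y₂ * F₀ y₁ ^ (θ₁ + θ₂ - θ₂' - 1) * F₀ y₂ ^ (θ₂' - 1)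
  else 0

lemma dprh_pow_integral (a b : ℝ) (F₀ f₀ : ℝ → ℝ)
    (hderiv : ∀ y ∈ Ioo a b, HasDerivAt F₀ (f₀ y) y)
    (hf₀pos : ∀ y ∈ Ioo a b, 0 < f₀ y)
    (hF₀pos : ∀ y ∈ Ioo a b, 0 < F₀ y)
    (hFa : Filter.Tendsto F₀ (nhdsWithin a (Ioi a)) (nhds 0))
    (c : ℝ) (hc : 0 < c) (u : ℝ) (hu : u ∈ Ioo a b) :
    IntervalIntegrable (fun v => f₀ v * F₀ v ^ (c - 1)) volume a u ∧
      ∫ v in a..u, f₀ v * F₀ v ^ (c - 1) = F₀ u ^ c / c := by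
  set H : ℝ → ℝ := fun v => if a < v then F₀ v ^ c / c else 0 with hH
  have hderivH : ∀ x ∈ Ioo a u, HasDerivAt H (f₀ x * F₀ x ^ (c - 1)) x := by
    intro x hx
    have hx' : x ∈ Ioo a b := ⟨hx.1, hx.2.trans hu.2⟩
    have h1 : HasDerivAt (fun y => F₀ y ^ c / c) (f₀ x * F₀ x ^ (c - 1)) x := by
      have := ((hderiv x hx').rpow_const (p := c) (Or.inl (hF₀pos x hx').ne')).div_const c
      refine this.congr_deriv ?_
      rw [div_eq_iff hc.ne']
      ring
    apply h1.congr_of_eventuallyEq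
    filter_upwards [Ioi_mem_nhds hx.1] with y hy
    simp [hH, show a < y from hy]
  have hcontH : ContinuousOn H (Icc a u) := by
    intro x hx
    rcases eq_or_lt_of_le hx.1 with h | h
    · subst h
      have htd : Filter.Tendsto H (nhdsWithin a (Ioi a)) (nhds 0) := by
        have h0 : Filter.Tendsto (fun v => F₀ v ^ c / c) (nhdsWithin a (Ioi a)) (nhds 0) := by
          have := ((Real.continuousAt_rpow_const 0 c (Or.inr hc.le)).tendsto.comp hFa).div_const c
          simpa [Real.zero_rpow hc.ne'] using this
        apply h0.congr'
        filter_upwards [self_mem_nhdsWithin] with y hy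
        simp [hH, show a < y from hy]
      have : ContinuousWithinAt H (Ioi a) a := by
        have hx0 : H a = 0 := by simp [hH]
        rw [ContinuousWithinAt, hx0]
        exact htd
      exact (continuousWithinAt_Ioi_iff_Ici.mp this).mono Icc_subset_Ici_self
    · have hx' : x ∈ Ioo a b := ⟨h, lt_of_le_of_lt hx.2 hu.2⟩
      have h1 : ContinuousAt (fun y => F₀ y ^ c / c) x :=
        ((hderiv x hx').continuousAt.rpow_const (Or.inr hc.le)).div_const c
      have : ContinuousAt H x := by
        apply h1.congr
        filter_upwards [Ioi_mem_nhds h] with y hy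
        simp [hH, show a < y from hy]
      exact this.continuousWithinAt
  have hnonneg : ∀ x ∈ Ioo a u, 0 ≤ f₀ x * F₀ x ^ (c - 1) := by
    intro x hx
    have hx' : x ∈ Ioo a b := ⟨hx.1, hx.2.trans hu.2⟩
    exact mul_nonneg (hf₀pos x hx').le (Real.rpow_nonneg (hF₀pos x hx').le _)
  have hau : a ≤ u := hu.1.le
  have hint : IntervalIntegrable (fun v => f₀ v * F₀ v ^ (c - 1)) volume a u := by
    apply intervalIntegral.intervalIntegrable_deriv_of_nonneg
    · rwa [uIcc_of_le hau]
    · rwa [min_eq_left hau, max_eq_right hau]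
    · rwa [min_eq_left hau, max_eq_right hau]
  refine ⟨hint, ?_⟩
  have := intervalIntegral.integral_eq_sub_of_hasDeriv_right_of_le hau hcontH
    (fun x hx => (hderivH x hx).hasDerivWithinAt) hint
  rw [this]
  simp [hH, hu.1, lt_irrefl a]

lemma dprh_pow_integral_interior (a b : ℝ) (F₀ f₀ : ℝ → ℝ)
    (hderiv : ∀ y ∈ Ioo a b, HasDerivAt F₀ (f₀ y) y)
    (hf₀cont : ContinuousOn f₀ (Ioo a b))
    (hF₀pos : ∀ y ∈ Ioo a b, 0 < F₀ y)
    (c : ℝ) (hc : c ≠ 0) (u w : ℝ) (hu : u ∈ Ioo a b) (hw : w ∈ Ioo a b) (huw : u ≤ w) :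
    IntervalIntegrable (fun v => f₀ v * F₀ v ^ (c - 1)) volume u w ∧
      ∫ v in u..w, f₀ v * F₀ v ^ (c - 1) = (F₀ w ^ c - F₀ u ^ c) / c := by
  have hsub : Icc u w ⊆ Ioo a b := fun x hx => ⟨lt_of_lt_of_le hu.1 hx.1, lt_of_le_of_lt hx.2 hw.2⟩
  have hcontF : ContinuousOn F₀ (Icc u w) := fun x hx =>
    ((hderiv x (hsub hx)).continuousAt).continuousWithinAt
  have hcont : ContinuousOn (fun v => f₀ v * F₀ v ^ (c - 1)) (Icc u w) := by
    apply (hf₀cont.mono hsub).mul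
    exact hcontF.rpow_const (fun x hx => Or.inl (hF₀pos x (hsub hx)).ne')
  have hint : IntervalIntegrable (fun v => f₀ v * F₀ v ^ (c - 1)) volume u w := by
    apply hcont.intervalIntegrable_of_Icc huw
  refine ⟨hint, ?_⟩
  have hder : ∀ x ∈ uIcc u w, HasDerivAt (fun y => F₀ y ^ c / c) (f₀ x * F₀ x ^ (c - 1)) x := by
    intro x hx
    rw [uIcc_of_le huw] at hx
    have hx' : x ∈ Ioo a b := hsub hx
    have := ((hderiv x hx').rpow_const (p := c) (Or.inl (hF₀pos x hx').ne')).div_const c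
    refine this.congr_deriv ?_
    rw [div_eq_iff hc]
    ring
  rw [intervalIntegral.integral_eq_sub_of_hasDerivAt hder hint]
  ring

lemma dprh_inner (a b : ℝ) (F₀ f₀ : ℝ → ℝ)
    (hderiv : ∀ y ∈ Ioo a b, HasDerivAt F₀ (f₀ y) y)
    (hf₀cont : ContinuousOn f₀ (Ioo a b))
    (hf₀pos : ∀ y ∈ Ioo a b, 0 < f₀ y)
    (hF₀pos : ∀ y ∈ Ioo a b, 0 < F₀ y)
    (hFa : Filter.Tendsto F₀ (nhdsWithin a (Ioi a)) (nhds 0))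
    (θ₁ θ₂ θ₁' θ₂' : ℝ) (hθ₁ : 0 < θ₁) (hθ₂ : 0 < θ₂) (hθ₁' : 0 < θ₁') (hθ₂' : 0 < θ₂')
    (hne : θ₁ + θ₂ ≠ θ₁') (u t : ℝ) (hau : a < u) (hut : u < t) (htb : t < b) :
    (∫ v in a..t, dprh a b F₀ f₀ θ₁ θ₂ θ₁' θ₂' u v)
      = (θ₁ - θ₁' * θ₂ / (θ₁ + θ₂ - θ₁')) * (f₀ u * F₀ u ^ (θ₁ + θ₂ - 1))
        + (θ₁' * θ₂ * F₀ t ^ (θ₁ + θ₂ - θ₁') / (θ₁ + θ₂ - θ₁')) * (f₀ u * F₀ u ^ (θ₁' - 1)) := by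
  have hu' : u ∈ Ioo a b := ⟨hau, hut.trans htb⟩
  have ht' : t ∈ Ioo a b := ⟨hau.trans hut, htb⟩
  have hq : θ₁ + θ₂ - θ₁' ≠ 0 := sub_ne_zero.mpr hne
  have hFu : 0 < F₀ u := hF₀pos u hu'
  -- a.e. equality on (a, u]
  have hae1 : ∀ᵐ v : ℝ, v ∈ Set.uIoc a u → dprh a b F₀ f₀ θ₁ θ₂ θ₁' θ₂' u v
      = (θ₁ * θ₂' * f₀ u * F₀ u ^ (θ₁ + θ₂ - θ₂' - 1)) * (f₀ v * F₀ v ^ (θ₂' - 1)) := by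
    have h0 : ∀ᵐ v : ℝ, v ≠ u := by
      rw [MeasureTheory.ae_iff]
      simpa using Real.volume_singleton
    filter_upwards [h0] with v hvne hv
    rw [uIoc_of_le hau.le] at hv
    have hvu : v < u := lt_of_le_of_ne hv.2 hvne
    rw [dprh, if_neg (fun h => absurd h.2.1 (not_lt.mpr hv.2)), if_pos ⟨hv.1, hvu, hu'.2⟩]
    ring
  -- exact equality on (u, t]
  have hae2 : ∀ᵐ v : ℝ, v ∈ Set.uIoc u t → dprh a b F₀ f₀ θ₁ θ₂ θ₁' θ₂' u v
      = (θ₁' * θ₂ * f₀ u * F₀ u ^ (θ₁' - 1)) * (f₀ v * F₀ v ^ (θ₁ + θ₂ - θ₁' - 1)) := by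
    apply Filter.Eventually.of_forall
    intro v hv
    rw [uIoc_of_le hut.le] at hv
    rw [dprh, if_pos ⟨hau, hv.1, lt_of_le_of_lt hv.2 htb⟩]
    ring
  have hi1 := dprh_pow_integral a b F₀ f₀ hderiv hf₀pos hF₀pos hFa θ₂' hθ₂' u hu'
  have hi2 := dprh_pow_integral_interior a b F₀ f₀ hderiv hf₀cont hF₀pos
    (θ₁ + θ₂ - θ₁') hq u t hu' ht' hut.le
  have hint1 : IntervalIntegrable (fun v => dprh a b F₀ f₀ θ₁ θ₂ θ₁' θ₂' u v) volume a u := by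
    apply (hi1.1.const_mul (θ₁ * θ₂' * f₀ u * F₀ u ^ (θ₁ + θ₂ - θ₂' - 1))).congr_ae
    exact (MeasureTheory.ae_restrict_iff' measurableSet_uIoc).mpr
      (hae1.mono fun v h hv => (h hv).symm)
  have hint2 : IntervalIntegrable (fun v => dprh a b F₀ f₀ θ₁ θ₂ θ₁' θ₂' u v) volume u t := by
    apply (hi2.1.const_mul (θ₁' * θ₂ * f₀ u * F₀ u ^ (θ₁' - 1))).congr_ae
    exact (MeasureTheory.ae_restrict_iff' measurableSet_uIoc).mpr
      (hae2.mono fun v h hv => (h hv).symm)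
  rw [← intervalIntegral.integral_add_adjacent_intervals hint1 hint2,
    intervalIntegral.integral_congr_ae hae1, intervalIntegral.integral_congr_ae hae2,
    intervalIntegral.integral_const_mul, intervalIntegral.integral_const_mul, hi1.2, hi2.2]
  have hA1 : F₀ u ^ (θ₁ + θ₂ - θ₂' - 1) ≠ 0 := (Real.rpow_pos_of_pos hFu _).ne'
  have e4 : F₀ u ^ θ₂' = F₀ u ^ (θ₁' - 1) * F₀ u ^ (θ₁ + θ₂ - θ₁') / F₀ u ^ (θ₁ + θ₂ - θ₂' - 1) := by
    rw [eq_div_iff hA1, ← Real.rpow_add hFu, ← Real.rpow_add hFu]; congr 1; ring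
  have e5 : F₀ u ^ (θ₁ + θ₂ - 1) = F₀ u ^ (θ₁' - 1) * F₀ u ^ (θ₁ + θ₂ - θ₁') := by
    rw [← Real.rpow_add hFu]; congr 1; ring
  rw [e4, e5]
  field_simp
  ring

lemma dprh_double (a b : ℝ) (F₀ f₀ : ℝ → ℝ)
    (hderiv : ∀ y ∈ Ioo a b, HasDerivAt F₀ (f₀ y) y)
    (hf₀cont : ContinuousOn f₀ (Ioo a b))
    (hf₀pos : ∀ y ∈ Ioo a b, 0 < f₀ y)
    (hF₀pos : ∀ y ∈ Ioo a b, 0 < F₀ y)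
    (hFa : Filter.Tendsto F₀ (nhdsWithin a (Ioi a)) (nhds 0))
    (θ₁ θ₂ θ₁' θ₂' : ℝ) (hθ₁ : 0 < θ₁) (hθ₂ : 0 < θ₂) (hθ₁' : 0 < θ₁') (hθ₂' : 0 < θ₂')
    (hne : θ₁ + θ₂ ≠ θ₁') (s t : ℝ) (has : a < s) (hst : s < t) (htb : t < b) :
    (∫ u in a..s, ∫ v in a..t, dprh a b F₀ f₀ θ₁ θ₂ θ₁' θ₂' u v)
      = (θ₂ * F₀ s ^ θ₁' * F₀ t ^ (θ₁ + θ₂ - θ₁') + (θ₁ - θ₁') * F₀ s ^ (θ₁ + θ₂))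
          / (θ₁ + θ₂ - θ₁') := by
  have hs' : s ∈ Ioo a b := ⟨has, hst.trans htb⟩
  have hq : θ₁ + θ₂ - θ₁' ≠ 0 := sub_ne_zero.mpr hne
  have hae : ∀ᵐ u : ℝ, u ∈ Set.uIoc a s → (∫ v in a..t, dprh a b F₀ f₀ θ₁ θ₂ θ₁' θ₂' u v)
      = (θ₁ - θ₁' * θ₂ / (θ₁ + θ₂ - θ₁')) * (f₀ u * F₀ u ^ (θ₁ + θ₂ - 1))
        + (θ₁' * θ₂ * F₀ t ^ (θ₁ + θ₂ - θ₁') / (θ₁ + θ₂ - θ₁')) * (f₀ u * F₀ u ^ (θ₁' - 1)) := by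
    apply Filter.Eventually.of_forall
    intro u hu
    rw [uIoc_of_le has.le] at hu
    exact dprh_inner a b F₀ f₀ hderiv hf₀cont hf₀pos hF₀pos hFa θ₁ θ₂ θ₁' θ₂'
      hθ₁ hθ₂ hθ₁' hθ₂' hne u t hu.1 (lt_of_le_of_lt hu.2 hst) htb
  rw [intervalIntegral.integral_congr_ae hae]
  have hi1 := dprh_pow_integral a b F₀ f₀ hderiv hf₀pos hF₀pos hFa (θ₁ + θ₂)
    (by positivity) s hs'
  have hi2 := dprh_pow_integral a b F₀ f₀ hderiv hf₀pos hF₀pos hFa θ₁' hθ₁' s hs'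
  rw [intervalIntegral.integral_add (hi1.1.const_mul _) (hi2.1.const_mul _),
    intervalIntegral.integral_const_mul, intervalIntegral.integral_const_mul, hi1.2, hi2.2]
  have h12 : θ₁ + θ₂ ≠ 0 := by positivity
  field_simp
  ring

theorem dprh_local_dependence_nondegenerate
    (a b : ℝ) (hab : a < b) (F₀ f₀ : ℝ → ℝ)
    (hderiv : ∀ y ∈ Ioo a b, HasDerivAt F₀ (f₀ y) y)
    (hf₀cont : ContinuousOn f₀ (Ioo a b))
    (hmono : StrictMonoOn F₀ (Ioo a b))
    (hf₀pos : ∀ y ∈ Ioo a b, 0 < f₀ y)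
    (hF₀pos : ∀ y ∈ Ioo a b, 0 < F₀ y)
    (hF₀lt1 : ∀ y ∈ Ioo a b, F₀ y < 1)
    (hFa : Filter.Tendsto F₀ (nhdsWithin a (Ioi a)) (nhds 0))
    (hFb : Filter.Tendsto F₀ (nhdsWithin b (Iio b)) (nhds 1))
    (θ₁ θ₂ θ₁' θ₂' : ℝ) (hθ₁ : 0 < θ₁) (hθ₂ : 0 < θ₂) (hθ₁' : 0 < θ₁') (hθ₂' : 0 < θ₂')
    (hne : θ₁ + θ₂ ≠ θ₁') (y₁ y₂ : ℝ) (h₁ : a < y₁) (h₂ : y₁ < y₂) (h₃ : y₂ < b)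
    :
    (∫ u in a..y₁, ∫ v in a..y₂, dprh a b F₀ f₀ θ₁ θ₂ θ₁' θ₂' u v) * dprh a b F₀ f₀ θ₁ θ₂ θ₁' θ₂' y₁ y₂ /
      (deriv (fun s => ∫ u in a..s, ∫ v in a..y₂, dprh a b F₀ f₀ θ₁ θ₂ θ₁' θ₂' u v) y₁ *
        deriv (fun t => ∫ u in a..y₁, ∫ v in a..t, dprh a b F₀ f₀ θ₁ θ₂ θ₁' θ₂' u v) y₂) =
      (θ₁' * (θ₁ - θ₁') * F₀ y₁ ^ (θ₁ + θ₂ - θ₁') + θ₁' * θ₂ * F₀ y₂ ^ (θ₁ + θ₂ - θ₁')) /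
        ((θ₁ - θ₁') * (θ₁ + θ₂) * F₀ y₁ ^ (θ₁ + θ₂ - θ₁') + θ₁' * θ₂ * F₀ y₂ ^ (θ₁ + θ₂ - θ₁')) := by
  have hy₁' : y₁ ∈ Ioo a b := ⟨h₁, h₂.trans h₃⟩
  have hy₂' : y₂ ∈ Ioo a b := ⟨h₁.trans h₂, h₃⟩
  have hq : θ₁ + θ₂ - θ₁' ≠ 0 := sub_ne_zero.mpr hne
  have hA : 0 < F₀ y₁ := hF₀pos y₁ hy₁'
  have hB : 0 < F₀ y₂ := hF₀pos y₂ hy₂'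
  have hAB : F₀ y₁ < F₀ y₂ := hmono hy₁' hy₂' h₂
  have hα : 0 < f₀ y₁ := hf₀pos y₁ hy₁'
  have hβ : 0 < f₀ y₂ := hf₀pos y₂ hy₂'
  -- first derivative
  have hd1 : deriv (fun s => ∫ u in a..s, ∫ v in a..y₂, dprh a b F₀ f₀ θ₁ θ₂ θ₁' θ₂' u v) y₁
      = (θ₂ * (f₀ y₁ * θ₁' * F₀ y₁ ^ (θ₁' - 1)) * F₀ y₂ ^ (θ₁ + θ₂ - θ₁')
          + (θ₁ - θ₁') * (f₀ y₁ * (θ₁ + θ₂) * F₀ y₁ ^ (θ₁ + θ₂ - 1))) / (θ₁ + θ₂ - θ₁') := by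
    have hev : (fun s => ∫ u in a..s, ∫ v in a..y₂, dprh a b F₀ f₀ θ₁ θ₂ θ₁' θ₂' u v)
        =ᶠ[nhds y₁] (fun s => (θ₂ * F₀ s ^ θ₁' * F₀ y₂ ^ (θ₁ + θ₂ - θ₁')
          + (θ₁ - θ₁') * F₀ s ^ (θ₁ + θ₂)) / (θ₁ + θ₂ - θ₁')) := by
      filter_upwards [Ioo_mem_nhds h₁ h₂] with s hs
      exact dprh_double a b F₀ f₀ hderiv hf₀cont hf₀pos hF₀pos hFa θ₁ θ₂ θ₁' θ₂'
        hθ₁ hθ₂ hθ₁' hθ₂' hne s y₂ hs.1 hs.2 h₃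
    rw [hev.deriv_eq]
    have k1 : HasDerivAt (fun s => F₀ s ^ θ₁') (f₀ y₁ * θ₁' * F₀ y₁ ^ (θ₁' - 1)) y₁ :=
      (hderiv y₁ hy₁').rpow_const (Or.inl hA.ne')
    have k2 : HasDerivAt (fun s => F₀ s ^ (θ₁ + θ₂))
        (f₀ y₁ * (θ₁ + θ₂) * F₀ y₁ ^ (θ₁ + θ₂ - 1)) y₁ :=
      (hderiv y₁ hy₁').rpow_const (Or.inl hA.ne')
    exact ((((k1.const_mul θ₂).mul_const (F₀ y₂ ^ (θ₁ + θ₂ - θ₁'))).add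
      (k2.const_mul (θ₁ - θ₁'))).div_const (θ₁ + θ₂ - θ₁')).deriv
  -- second derivative
  have hd2 : deriv (fun t => ∫ u in a..y₁, ∫ v in a..t, dprh a b F₀ f₀ θ₁ θ₂ θ₁' θ₂' u v) y₂
      = (θ₂ * F₀ y₁ ^ θ₁' * (f₀ y₂ * (θ₁ + θ₂ - θ₁') * F₀ y₂ ^ (θ₁ + θ₂ - θ₁' - 1)))
          / (θ₁ + θ₂ - θ₁') := by
    have hev : (fun t => ∫ u in a..y₁, ∫ v in a..t, dprh a b F₀ f₀ θ₁ θ₂ θ₁' θ₂' u v)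
        =ᶠ[nhds y₂] (fun t => (θ₂ * F₀ y₁ ^ θ₁' * F₀ t ^ (θ₁ + θ₂ - θ₁')
          + (θ₁ - θ₁') * F₀ y₁ ^ (θ₁ + θ₂)) / (θ₁ + θ₂ - θ₁')) := by
      filter_upwards [Ioo_mem_nhds h₂ h₃] with t ht
      exact dprh_double a b F₀ f₀ hderiv hf₀cont hf₀pos hF₀pos hFa θ₁ θ₂ θ₁' θ₂'
        hθ₁ hθ₂ hθ₁' hθ₂' hne y₁ t h₁ ht.1 ht.2
    rw [hev.deriv_eq]
    have k3 : HasDerivAt (fun t => F₀ t ^ (θ₁ + θ₂ - θ₁'))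
        (f₀ y₂ * (θ₁ + θ₂ - θ₁') * F₀ y₂ ^ (θ₁ + θ₂ - θ₁' - 1)) y₂ :=
      (hderiv y₂ hy₂').rpow_const (Or.inl hB.ne')
    exact (((k3.const_mul (θ₂ * F₀ y₁ ^ θ₁')).add_const
      ((θ₁ - θ₁') * F₀ y₁ ^ (θ₁ + θ₂))).div_const (θ₁ + θ₂ - θ₁')).deriv
  -- density value
  have hf : dprh a b F₀ f₀ θ₁ θ₂ θ₁' θ₂' y₁ y₂
      = θ₁' * θ₂ * f₀ y₁ * f₀ y₂ * F₀ y₁ ^ (θ₁' - 1) * F₀ y₂ ^ (θ₁ + θ₂ - θ₁' - 1) := by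
    rw [dprh, if_pos ⟨h₁, h₂, h₃⟩]
  rw [dprh_double a b F₀ f₀ hderiv hf₀cont hf₀pos hF₀pos hFa θ₁ θ₂ θ₁' θ₂'
      hθ₁ hθ₂ hθ₁' hθ₂' hne y₁ y₂ h₁ h₂ h₃, hf, hd1, hd2]
  -- rewrite rpow atoms
  have e1 : F₀ y₁ ^ θ₁' = F₀ y₁ ^ (θ₁' - 1) * F₀ y₁ := by
    rw [← Real.rpow_add_one hA.ne']; congr 1; ring
  have e2 : F₀ y₁ ^ (θ₁ + θ₂) = F₀ y₁ ^ (θ₁' - 1) * F₀ y₁ * F₀ y₁ ^ (θ₁ + θ₂ - θ₁') := by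
    rw [← Real.rpow_add_one hA.ne', ← Real.rpow_add hA]; congr 1; ring
  have e3 : F₀ y₁ ^ (θ₁ + θ₂ - 1) = F₀ y₁ ^ (θ₁' - 1) * F₀ y₁ ^ (θ₁ + θ₂ - θ₁') := by
    rw [← Real.rpow_add hA]; congr 1; ring
  have e4 : F₀ y₂ ^ (θ₁ + θ₂ - θ₁') = F₀ y₂ ^ (θ₁ + θ₂ - θ₁' - 1) * F₀ y₂ := by
    rw [← Real.rpow_add_one hB.ne']; congr 1; ring
  -- nonvanishing of the two denominators
  have hkey : 0 < θ₁' * θ₂ * (F₀ y₂ ^ (θ₁ + θ₂ - θ₁') - F₀ y₁ ^ (θ₁ + θ₂ - θ₁'))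
      / (θ₁ + θ₂ - θ₁') + θ₁ * F₀ y₁ ^ (θ₁ + θ₂ - θ₁') := by
    have hQ : 0 < F₀ y₁ ^ (θ₁ + θ₂ - θ₁') := Real.rpow_pos_of_pos hA _
    rcases lt_or_gt_of_ne hq with hlt | hgt
    · have : F₀ y₂ ^ (θ₁ + θ₂ - θ₁') < F₀ y₁ ^ (θ₁ + θ₂ - θ₁') :=
        Real.rpow_lt_rpow_of_neg hA hAB (by linarith)
      have hpos : 0 < θ₁' * θ₂ * (F₀ y₂ ^ (θ₁ + θ₂ - θ₁') - F₀ y₁ ^ (θ₁ + θ₂ - θ₁'))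
          / (θ₁ + θ₂ - θ₁') := div_pos_of_neg_of_neg
        (mul_neg_of_pos_of_neg (mul_pos hθ₁' hθ₂) (by linarith)) (by linarith)
      nlinarith
    · have : F₀ y₁ ^ (θ₁ + θ₂ - θ₁') < F₀ y₂ ^ (θ₁ + θ₂ - θ₁') :=
        Real.rpow_lt_rpow hA.le hAB (by linarith)
      have hpos : 0 < θ₁' * θ₂ * (F₀ y₂ ^ (θ₁ + θ₂ - θ₁') - F₀ y₁ ^ (θ₁ + θ₂ - θ₁'))
          / (θ₁ + θ₂ - θ₁') := div_pos
        (mul_pos (mul_pos hθ₁' hθ₂) (by linarith)) (by linarith)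
      nlinarith
  have hD₀ : (θ₁ - θ₁') * (θ₁ + θ₂) * F₀ y₁ ^ (θ₁ + θ₂ - θ₁')
      + θ₁' * θ₂ * F₀ y₂ ^ (θ₁ + θ₂ - θ₁') ≠ 0 := by
    have heq : (θ₁ - θ₁') * (θ₁ + θ₂) * F₀ y₁ ^ (θ₁ + θ₂ - θ₁')
        + θ₁' * θ₂ * F₀ y₂ ^ (θ₁ + θ₂ - θ₁')
        = (θ₁ + θ₂ - θ₁') * (θ₁' * θ₂ * (F₀ y₂ ^ (θ₁ + θ₂ - θ₁') - F₀ y₁ ^ (θ₁ + θ₂ - θ₁'))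
          / (θ₁ + θ₂ - θ₁') + θ₁ * F₀ y₁ ^ (θ₁ + θ₂ - θ₁')) := by
      field_simp
      ring
    rw [heq]
    exact mul_ne_zero hq hkey.ne'
  have hD1 : (θ₂ * (f₀ y₁ * θ₁' * F₀ y₁ ^ (θ₁' - 1)) * F₀ y₂ ^ (θ₁ + θ₂ - θ₁')
      + (θ₁ - θ₁') * (f₀ y₁ * (θ₁ + θ₂) * F₀ y₁ ^ (θ₁ + θ₂ - 1))) / (θ₁ + θ₂ - θ₁') ≠ 0 := by
    have hP : 0 < F₀ y₁ ^ (θ₁' - 1) := Real.rpow_pos_of_pos hA _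
    have heq : (θ₂ * (f₀ y₁ * θ₁' * F₀ y₁ ^ (θ₁' - 1)) * F₀ y₂ ^ (θ₁ + θ₂ - θ₁')
        + (θ₁ - θ₁') * (f₀ y₁ * (θ₁ + θ₂) * F₀ y₁ ^ (θ₁ + θ₂ - 1))) / (θ₁ + θ₂ - θ₁')
        = f₀ y₁ * F₀ y₁ ^ (θ₁' - 1) * (θ₁' * θ₂ * (F₀ y₂ ^ (θ₁ + θ₂ - θ₁')
          - F₀ y₁ ^ (θ₁ + θ₂ - θ₁')) / (θ₁ + θ₂ - θ₁') + θ₁ * F₀ y₁ ^ (θ₁ + θ₂ - θ₁')) := by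
      rw [e3]
      field_simp
      ring
    rw [heq]
    positivity
  have hD2 : (θ₂ * F₀ y₁ ^ θ₁' * (f₀ y₂ * (θ₁ + θ₂ - θ₁') * F₀ y₂ ^ (θ₁ + θ₂ - θ₁' - 1)))
      / (θ₁ + θ₂ - θ₁') ≠ 0 := by
    rw [div_ne_zero_iff]
    exact ⟨mul_ne_zero (mul_ne_zero hθ₂.ne' (Real.rpow_pos_of_pos hA _).ne')
      (mul_ne_zero (mul_ne_zero hβ.ne' hq) (Real.rpow_pos_of_pos hB _).ne'), hq⟩
  rw [div_eq_div_iff (mul_ne_zero hD1 hD2) hD₀]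
  rw [e1, e2, e3, e4]
  field_simp
  ring
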